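/- Let m ≤ n be integers and let U, U', V, V' be real sequences (U, U' defined for m ≤ k ≤ n+1; V, V' for m-1 ≤ k ≤ n). Set u_k = U_k - U_{k+1}, v_k = V_k - V_{k-1}, v'_k = V'_k - V'_{k-1}, δ_U = sup_{m≤k≤n} |U_k - U'_k|, δ_V = sup_{m≤k≤n} |V_k - V'_k|. Then |Σ_{k=m}^n U_k v_k − Σ_{k=m}^n U'_k v'_k| ≤ δ_U Σ_{k=m}^n |v'_k| + δ_V Σ_{k=m}^n |u_k| + |U_{n+1}V_n − U_m V_{m-1}| + |U_{n+1}V'_n − U_m V'_{m-1}|. -/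

import Mathlib

private lemma abel_aux (m : ℤ) (U V : ℤ → ℝ) :
    ∀ n, m ≤ n →
    ∑ k ∈ Finset.Icc m n, U k * (V k - V (k - 1))
      = ∑ k ∈ Finset.Icc m n, (U k - U (k + 1)) * V k
        + (U (n + 1) * V n - U m * V (m - 1)) := by
  refine Int.le_induction ?_ ?_
  · simp only [Finset.Icc_self, Finset.sum_singleton]
    ring
  · intro n hn ih
    have hins : Finset.Icc m (n + 1) = insert (n + 1) (Finset.Icc m n) := by
      ext x; simp [Finset.mem_Icc]; omega
    have hnm : (n + 1) ∉ Finset.Icc m n := by simp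
    rw [hins, Finset.sum_insert hnm, Finset.sum_insert hnm, ih]
    rw [show n + 1 - 1 = n by ring]
    ring

/-- Distance estimate via double summation by parts: with
`u_k = U_k - U_{k+1}`, `v_k = V_k - V_{k-1}`, `v'_k = V'_k - V'_{k-1}`, and
`δ_U`, `δ_V` bounds for `sup_{m≤k≤n} |U_k - U'_k|` and `sup_{m≤k≤n} |V_k - V'_k|`,
`|Σ U_k v_k − Σ U'_k v'_k| ≤ δ_U Σ|v'_k| + δ_V Σ|u_k|
  + |U_{n+1}V_n − U_m V_{m-1}| + |U_{n+1}V'_n − U_m V'_{m-1}|`. -/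
theorem distance_estimate (m n : ℤ) (hmn : m ≤ n)
    (U U' V V' : ℤ → ℝ) (δU δV : ℝ)
    (hU : ∀ k ∈ Finset.Icc m n, |U k - U' k| ≤ δU)
    (hV : ∀ k ∈ Finset.Icc m n, |V k - V' k| ≤ δV) :
    |∑ k ∈ Finset.Icc m n, U k * (V k - V (k - 1))
        - ∑ k ∈ Finset.Icc m n, U' k * (V' k - V' (k - 1))|
      ≤ δU * ∑ k ∈ Finset.Icc m n, |V' k - V' (k - 1)|
        + δV * ∑ k ∈ Finset.Icc m n, |U k - U (k + 1)|
        + |U (n + 1) * V n - U m * V (m - 1)|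
        + |U (n + 1) * V' n - U m * V' (m - 1)| := by
  set A := ∑ k ∈ Finset.Icc m n, (U k - U' k) * (V' k - V' (k - 1)) with hA
  set B := ∑ k ∈ Finset.Icc m n, (U k - U (k + 1)) * (V k - V' k) with hB
  have key : ∑ k ∈ Finset.Icc m n, U k * (V k - V (k - 1))
      - ∑ k ∈ Finset.Icc m n, U' k * (V' k - V' (k - 1))
      = A + B + (U (n + 1) * V n - U m * V (m - 1))
        - (U (n + 1) * V' n - U m * V' (m - 1)) := by
    have h1 := abel_aux m U (fun k => V k - V' k) n hmn
    have h2 : ∑ k ∈ Finset.Icc m n, U k * ((V k - V' k) - (V (k - 1) - V' (k - 1)))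
        = ∑ k ∈ Finset.Icc m n, U k * (V k - V (k - 1))
          - ∑ k ∈ Finset.Icc m n, U k * (V' k - V' (k - 1)) := by
      rw [← Finset.sum_sub_distrib]; apply Finset.sum_congr rfl; intros; ring
    have h3 : ∑ k ∈ Finset.Icc m n, U k * (V' k - V' (k - 1))
        - ∑ k ∈ Finset.Icc m n, U' k * (V' k - V' (k - 1)) = A := by
      rw [hA, ← Finset.sum_sub_distrib]; apply Finset.sum_congr rfl; intros; ring
    rw [h2] at h1
    rw [hB]
    linarith [h1]
  rw [key]
  have hAbound : |A| ≤ δU * ∑ k ∈ Finset.Icc m n, |V' k - V' (k - 1)| := by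
    calc |A| ≤ ∑ k ∈ Finset.Icc m n, |(U k - U' k) * (V' k - V' (k - 1))| :=
          Finset.abs_sum_le_sum_abs _ _
      _ ≤ ∑ k ∈ Finset.Icc m n, δU * |V' k - V' (k - 1)| := by
          apply Finset.sum_le_sum
          intro k hk
          rw [abs_mul]
          exact mul_le_mul_of_nonneg_right (hU k hk) (abs_nonneg _)
      _ = δU * ∑ k ∈ Finset.Icc m n, |V' k - V' (k - 1)| := by
          rw [Finset.mul_sum]
  have hBbound : |B| ≤ δV * ∑ k ∈ Finset.Icc m n, |U k - U (k + 1)| := by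
    calc |B| ≤ ∑ k ∈ Finset.Icc m n, |(U k - U (k + 1)) * (V k - V' k)| :=
          Finset.abs_sum_le_sum_abs _ _
      _ ≤ ∑ k ∈ Finset.Icc m n, |U k - U (k + 1)| * δV := by
          apply Finset.sum_le_sum
          intro k hk
          rw [abs_mul]
          exact mul_le_mul_of_nonneg_left (hV k hk) (abs_nonneg _)
      _ = δV * ∑ k ∈ Finset.Icc m n, |U k - U (k + 1)| := by
          rw [← Finset.sum_mul, mul_comm]
  calc |A + B + (U (n + 1) * V n - U m * V (m - 1))
        - (U (n + 1) * V' n - U m * V' (m - 1))|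
      ≤ |A| + |B| + |U (n + 1) * V n - U m * V (m - 1)|
        + |U (n + 1) * V' n - U m * V' (m - 1)| := by
        have := abs_add_le (A + B) (U (n + 1) * V n - U m * V (m - 1))
        have := abs_add_le A B
        have := abs_sub (A + B + (U (n + 1) * V n - U m * V (m - 1)))
          (U (n + 1) * V' n - U m * V' (m - 1))
        linarith
    _ ≤ _ := by linarith
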